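/- Grouping effect combined bound (Theorems 1 and 2 together): with H = ((A+I)/2)^k X and G_{ip} = h_i c_p as above (c_p = (1+α)/(β−α)(I_d − B^T C_1 B) B_p^T, C_1 = (B B^T + (α+β) I)^{-1}), for any nodes i, j and anchor index p, |G_{ip} − G_{jp}| ≤ (1/2^k)(||(A_i − A_j) P X|| + ||x_i − x_j||) · ||c_p||, where P = Σ_{l=0}^{k−1} C(k, l+1) A^l. In particular, if A_i = A_j and x_i = x_j, then G_{ip} = G_{jp} for all p. -/

import Mathlib

open Matrix Finset

noncomputable def rowNorm {d : ℕ} (v : Fin d → ℝ) : ℝ := Real.sqrt (∑ t, v t ^ 2)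

lemma rowNorm_nonneg {d : ℕ} (v : Fin d → ℝ) : 0 ≤ rowNorm v := Real.sqrt_nonneg _

lemma rowNorm_eq_norm {d : ℕ} (v : Fin d → ℝ) :
    rowNorm v = ‖(WithLp.equiv 2 (Fin d → ℝ)).symm v‖ := by
  rw [EuclideanSpace.norm_eq]
  simp [rowNorm, sq_abs]

lemma rowNorm_add_le {d : ℕ} (u v : Fin d → ℝ) :
    rowNorm (u + v) ≤ rowNorm u + rowNorm v := by
  simp only [rowNorm_eq_norm]
  have : (WithLp.equiv 2 (Fin d → ℝ)).symm (u + v)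
      = (WithLp.equiv 2 (Fin d → ℝ)).symm u + (WithLp.equiv 2 (Fin d → ℝ)).symm v := rfl
  rw [this]; exact norm_add_le _ _

lemma abs_dot_le {d : ℕ} (u v : Fin d → ℝ) :
    |u ⬝ᵥ v| ≤ rowNorm u * rowNorm v := by
  simp only [rowNorm_eq_norm]
  have : u ⬝ᵥ v = inner ℝ ((WithLp.equiv 2 (Fin d → ℝ)).symm u)
      ((WithLp.equiv 2 (Fin d → ℝ)).symm v) := by
    simp [dotProduct, PiLp.inner_apply, RCLike.inner_apply, mul_comm]
  rw [this]
  exact abs_real_inner_le_norm _ _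

lemma add_pow_eq {N : ℕ} (A : Matrix (Fin N) (Fin N) ℝ) (k : ℕ)
    (P : Matrix (Fin N) (Fin N) ℝ)
    (hP : P = ∑ l ∈ Finset.range k, (k.choose (l + 1) : ℝ) • A ^ l) :
    (A + 1) ^ k = 1 + A * P := by
  have h1 : (A + 1) ^ k = ∑ mm ∈ Finset.range (k + 1), (k.choose mm : ℝ) • A ^ mm := by
    rw [(Commute.one_right A).add_pow]
    refine Finset.sum_congr rfl fun mm _ => ?_
    rw [one_pow, mul_one, Nat.cast_smul_eq_nsmul, nsmul_eq_mul]
    exact (Nat.commute_cast (A ^ mm) (k.choose mm)).eq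
  rw [h1, Finset.sum_range_succ']
  simp only [pow_zero, Nat.choose_zero_right, Nat.cast_one, one_smul]
  rw [add_comm]
  congr 1
  rw [hP, Finset.mul_sum]
  refine Finset.sum_congr rfl fun l _ => ?_
  rw [Matrix.mul_smul, ← pow_succ']

theorem combined_grouping_effect {N d m : ℕ}
    (A : Matrix (Fin N) (Fin N) ℝ) (X : Matrix (Fin N) (Fin d) ℝ)
    (B : Matrix (Fin m) (Fin d) ℝ)
    (α β : ℝ) (hα : 0 < α) (hβ : 0 < β) (hne : β ≠ α)
    (k : ℕ) (hk : 1 ≤ k)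
    (H : Matrix (Fin N) (Fin d) ℝ) (hH : H = ((2⁻¹ : ℝ) • (A + 1)) ^ k * X)
    (P : Matrix (Fin N) (Fin N) ℝ)
    (hP : P = ∑ l ∈ Finset.range k, (k.choose (l + 1) : ℝ) • A ^ l)
    (C₁ : Matrix (Fin m) (Fin m) ℝ)
    (hC₁ : C₁ = (B * Bᵀ + (α + β) • (1 : Matrix (Fin m) (Fin m) ℝ))⁻¹)
    (c : Fin m → Fin d → ℝ)
    (hc : ∀ p, c p = ((1 + α) / (β - α)) •
      Matrix.mulVec ((1 : Matrix (Fin d) (Fin d) ℝ) - Bᵀ * C₁ * B) (B p))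
    (G : Fin N → Fin m → ℝ) (hG : ∀ i p, G i p = H i ⬝ᵥ c p) :
    (∀ (i j : Fin N) (p : Fin m),
      |G i p - G j p| ≤ (1 / 2 ^ k) *
        (rowNorm (Matrix.vecMul (A i - A j) (P * X)) +
          rowNorm (fun t => X i t - X j t)) * rowNorm (c p)) ∧
      (∀ i j : Fin N, A i = A j → X i = X j → ∀ p, G i p = G j p) := by
  have hH2 : H = ((2 : ℝ) ^ k)⁻¹ • (X + A * (P * X)) := by
    rw [hH, smul_pow, add_pow_eq A k P hP, Matrix.smul_mul, Matrix.add_mul, Matrix.one_mul,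
      Matrix.mul_assoc, inv_pow]
  have hdiff : ∀ i j : Fin N, (fun t => H i t - H j t) =
      ((2 : ℝ) ^ k)⁻¹ • (Matrix.vecMul (A i - A j) (P * X) + fun t => X i t - X j t) := by
    intro i j
    funext t
    simp only [hH2, Matrix.smul_apply, Matrix.add_apply, smul_eq_mul, Matrix.mul_apply,
      Matrix.vecMul, dotProduct, Pi.sub_apply, Pi.smul_apply, Pi.add_apply, sub_mul,
      Finset.sum_sub_distrib]
    ring
  have key : ∀ (i j : Fin N) (p : Fin m),
      |G i p - G j p| ≤ (1 / 2 ^ k) *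
        (rowNorm (Matrix.vecMul (A i - A j) (P * X)) +
          rowNorm (fun t => X i t - X j t)) * rowNorm (c p) := by
    intro i j p
    have h1 : G i p - G j p = ((2 : ℝ) ^ k)⁻¹ *
        ((Matrix.vecMul (A i - A j) (P * X) + fun t => X i t - X j t) ⬝ᵥ c p) := by
      have h0 : G i p - G j p = (fun t => H i t - H j t) ⬝ᵥ c p := by
        simp [hG, dotProduct, sub_mul, Finset.sum_sub_distrib]
      rw [h0, hdiff i j, smul_dotProduct, smul_eq_mul]
    rw [h1, abs_mul, abs_of_pos (by positivity : (0:ℝ) < ((2:ℝ) ^ k)⁻¹), one_div]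
    rw [mul_assoc]
    refine mul_le_mul_of_nonneg_left ?_ (by positivity)
    calc |(Matrix.vecMul (A i - A j) (P * X) + fun t => X i t - X j t) ⬝ᵥ c p|
        ≤ rowNorm (Matrix.vecMul (A i - A j) (P * X) + fun t => X i t - X j t) *
          rowNorm (c p) := abs_dot_le _ _
      _ ≤ (rowNorm (Matrix.vecMul (A i - A j) (P * X)) +
          rowNorm (fun t => X i t - X j t)) * rowNorm (c p) :=
        mul_le_mul_of_nonneg_right (rowNorm_add_le _ _) (rowNorm_nonneg _)
  refine ⟨key, fun i j hA hX p => ?_⟩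
  have h := key i j p
  have hz1 : Matrix.vecMul (A i - A j) (P * X) = 0 := by
    rw [hA, sub_self, Matrix.zero_vecMul]
  have hz2 : (fun t => X i t - X j t) = (0 : Fin d → ℝ) := by
    funext t; rw [hX, sub_self]; rfl
  have hz : rowNorm (0 : Fin d → ℝ) = 0 := by simp [rowNorm]
  rw [hz1, hz2, hz] at h
  simp only [add_zero, mul_zero, zero_mul] at h
  have := abs_nonneg (G i p - G j p)
  have : |G i p - G j p| = 0 := le_antisymm h this
  linarith [abs_eq_zero.mp this]
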